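/- Let q be a prime power, let l_1, l_2, ..., l_t be distinct odd primes coprime to q, let r_1, ..., r_t be positive integers, and for each i write ord_{l_i}(q) = 2^{a_i} d_i with a_i ≥ 0 an integer and d_i an odd positive integer. If a_1 = a_2 = ... = a_t = 1, then |Ω_{q^2, ∏_{i=1}^t l_i^{r_i}}| = Σ_{d | ∏_{i=1}^t l_i^{r_i}} φ(d)/ord_d(q^2), where φ is Euler's totient function. -/

import Mathlib

open Polynomial Finset

/-- The reciprocal polynomial `f*(x) = x^(deg f) * f(0)⁻¹ * f(1/x)`. -/
noncomputable def crecip {F : Type*} [Field F] (f : F[X]) : F[X] :=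
  C (f.coeff 0)⁻¹ * f.reverse

/-- The conjugate-reciprocal polynomial `f†`, obtained by applying the
conjugation `a ↦ a ^ q` to each coefficient of `f*`. -/
noncomputable def cdagger {F : Type*} [Field F] (q : ℕ) (f : F[X]) : F[X] :=
  (crecip f).sum fun i a => C (a ^ q) * X ^ i

/-- A polynomial is SCRIM if it is monic, irreducible, and self-conjugate-reciprocal. -/
def IsSCRIM {F : Type*} [Field F] (q : ℕ) (f : F[X]) : Prop :=
  f.Monic ∧ Irreducible f ∧ f = cdagger q f

/-- The set `Ω_{q²,n}` of SCRIM factors of `x^n - 1` over `F = F_{q²}`. -/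
def scrimFactors (F : Type*) [Field F] (q n : ℕ) : Set F[X] :=
  {f | IsSCRIM q f ∧ f ∣ X ^ n - 1}


lemma prod_range_shift_one {M : Type*} [CommMonoid M] {k : ℕ} {h : ℕ → M}
    (hp : ∀ j, h (j + k) = h j) :
    ∏ j ∈ Finset.range k, h (j + 1) = ∏ j ∈ Finset.range k, h j := by
  cases k with
  | zero => simp
  | succ k' =>
    rw [Finset.prod_range_succ, Finset.prod_range_succ' (fun j => h j)]
    have : h (k' + 1) = h 0 := by simpa using hp 0
    rw [this]

lemma prod_range_shift {M : Type*} [CommMonoid M] {k : ℕ} {h : ℕ → M}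
    (hp : ∀ j, h (j + k) = h j) (c : ℕ) :
    ∏ j ∈ Finset.range k, h (j + c) = ∏ j ∈ Finset.range k, h j := by
  induction c with
  | zero => simp
  | succ c ih =>
    have h1 : ∏ j ∈ Finset.range k, h (j + 1 + c) = ∏ j ∈ Finset.range k, h (j + c) :=
      prod_range_shift_one (h := fun j => h (j + c))
        (fun j => by simp only [show j + k + c = j + c + k by ring, hp])
    calc ∏ j ∈ Finset.range k, h (j + (c + 1))
        = ∏ j ∈ Finset.range k, h (j + 1 + c) := by
          refine Finset.prod_congr rfl fun j _ => by rw [show j + (c+1) = j + 1 + c by ring]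
      _ = ∏ j ∈ Finset.range k, h j := h1.trans ih

lemma int_step {l : ℕ} (hl : l.Prime) (hlodd : Odd l) {r : ℕ} (hr : 1 ≤ r) {a : ℤ}
    (ha : (l : ℤ) ^ r ∣ a + 1) : (l : ℤ) ^ (r + 1) ∣ a ^ l + 1 := by
  haveI : Fact l.Prime := ⟨hl⟩
  set S : ℤ := ∑ i ∈ Finset.range l, a ^ i * (-1 : ℤ) ^ (l - 1 - i) with hS
  have key : S * (a + 1) = a ^ l + 1 := by
    have := geom_sum₂_mul a (-1 : ℤ) l
    rw [sub_neg_eq_add] at this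
    rw [hS, this, hlodd.neg_one_pow, sub_neg_eq_add]
  have hl1 : (l : ℤ) ∣ a + 1 := dvd_trans (dvd_pow_self _ (by omega)) ha
  have haz : ((a : ZMod l)) = -1 := by
    have h0 : ((a + 1 : ℤ) : ZMod l) = 0 := by
      rw [ZMod.intCast_zmod_eq_zero_iff_dvd]; exact_mod_cast hl1
    push_cast at h0
    exact eq_neg_of_add_eq_zero_left h0
  have hSl : (l : ℤ) ∣ S := by
    have h0 : ((S : ℤ) : ZMod l) = 0 := by
      have hterm : ∀ i ∈ Finset.range l,
          ((a : ZMod l)) ^ i * (-1 : ZMod l) ^ (l - 1 - i) = 1 := by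
        intro i hi
        rw [haz, ← pow_add]
        have hi' : i + (l - 1 - i) = l - 1 := by
          have := Finset.mem_range.1 hi; omega
        rw [hi']
        exact (Nat.Odd.sub_odd hlodd odd_one).neg_one_pow
      rw [hS]
      push_cast
      rw [Finset.sum_congr rfl hterm]
      simp
    exact (ZMod.intCast_zmod_eq_zero_iff_dvd S l).1 h0
  rw [← key, pow_succ, mul_comm S (a + 1)]
  exact mul_dvd_mul ha hSl

lemma prime_pow_dvd_pow_add_one {l q d : ℕ} (hl : l.Prime) (hlodd : Odd l)
    (hd : Odd d) (hord : orderOf ((q : ZMod l)) = 2 * d) {r : ℕ} (hr : 0 < r) :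
    ∃ u, Odd u ∧ l ^ r ∣ q ^ u + 1 := by
  haveI : Fact l.Prime := ⟨hl⟩
  -- base case : l ∣ q ^ d + 1
  have hbase : l ∣ q ^ d + 1 := by
    set x : ZMod l := (q : ZMod l) ^ d with hx
    have hx2 : x ^ 2 = 1 := by
      rw [hx, ← pow_mul]
      exact orderOf_dvd_iff_pow_eq_one.1 (by rw [hord]; exact ⟨1, by ring⟩)
    have hd0 : d ≠ 0 := hd.pos.ne'
    have hx1 : x ≠ 1 := by
      intro h
      have := orderOf_dvd_iff_pow_eq_one.2 h
      rw [hord] at this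
      have := Nat.le_of_dvd (Nat.pos_of_ne_zero hd0) this
      omega
    have hfac : (x - 1) * (x + 1) = 0 := by linear_combination hx2
    have hxneg : x = -1 := by
      rcases mul_eq_zero.1 hfac with h | h
      · exact absurd (sub_eq_zero.1 h) hx1
      · exact eq_neg_of_add_eq_zero_left h
    have : ((q ^ d + 1 : ℕ) : ZMod l) = 0 := by
      push_cast
      rw [← hx, hxneg]; ring
    exact (ZMod.natCast_eq_zero_iff _ _).1 this
  -- induction on r
  suffices h : ∀ s : ℕ, ∃ u, Odd u ∧ l ^ (s + 1) ∣ q ^ u + 1 by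
    obtain ⟨u, hu, hdvd⟩ := h (r - 1)
    exact ⟨u, hu, by rwa [Nat.sub_add_cancel hr] at hdvd⟩
  intro s
  induction s with
  | zero => exact ⟨d, hd, by rwa [pow_one]⟩
  | succ s ih =>
    obtain ⟨u, hu, hdvd⟩ := ih
    refine ⟨u * l, hu.mul hlodd, ?_⟩
    have h1 : (l : ℤ) ^ (s + 1) ∣ ((q : ℤ) ^ u) + 1 := by
      have := Int.natCast_dvd_natCast.2 hdvd
      push_cast at this
      exact this
    have h2 := int_step hl hlodd (by omega) h1
    rw [← pow_mul] at h2
    have : ((l ^ (s + 1 + 1) : ℕ) : ℤ) ∣ ((q ^ (u * l) + 1 : ℕ) : ℤ) := by push_cast; exact h2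
    exact_mod_cast this

lemma global_dvd {t : ℕ} (q : ℕ) (l r a d : Fin t → ℕ)
    (hl : ∀ i, (l i).Prime) (hlodd : ∀ i, Odd (l i))
    (hinj : Function.Injective l) (hr : ∀ i, 0 < r i)
    (hord : ∀ i, orderOf ((q : ZMod (l i))) = 2 ^ (a i) * d i)
    (hd : ∀ i, Odd (d i))
    (ha : ∀ i, a i = 1) :
    ∃ u, Odd u ∧ (∏ i, l i ^ r i) ∣ q ^ u + 1 := by
  have key : ∀ i, ∃ u, Odd u ∧ l i ^ r i ∣ q ^ u + 1 := by
    intro i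
    refine prime_pow_dvd_pow_add_one (hl i) (hlodd i) (hd i) ?_ (hr i)
    rw [hord i, ha i, pow_one]
  choose u hu hdvd using key
  set U : ℕ := Finset.univ.lcm u with hU
  have hUdvd : U ∣ ∏ i, u i := Finset.lcm_dvd fun i _ => Finset.dvd_prod_of_mem u (Finset.mem_univ i)
  have hprododd : Odd (∏ i, u i) :=
    Finset.prod_induction u Odd (fun _ _ => Odd.mul) odd_one (fun i _ => hu i)
  have hUodd : Odd U := by
    rcases Nat.even_or_odd U with h | h
    · exfalso
      have h2 : 2 ∣ ∏ i, u i := dvd_trans h.two_dvd hUdvd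
      have h3 := Nat.odd_iff.1 hprododd
      omega
    · exact h
  refine ⟨U, hUodd, ?_⟩
  -- each prime power divides q ^ U + 1
  have hdvdU : ∀ i, l i ^ r i ∣ q ^ U + 1 := by
    intro i
    have hui : u i ∣ U := Finset.dvd_lcm (Finset.mem_univ i)
    obtain ⟨m, hm⟩ := hui
    have hmodd : Odd m := by
      rcases Nat.even_or_odd m with h | h
      · exfalso
        have h2 : 2 ∣ U := dvd_trans h.two_dvd (Dvd.intro_left (u i) hm.symm)
        have h3 := Nat.odd_iff.1 hUodd
        omega
      · exact h
    have : q ^ u i + 1 ∣ q ^ U + 1 := by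
      have := Odd.nat_add_dvd_pow_add_pow (q ^ u i) 1 hmodd
      rwa [one_pow, ← pow_mul, ← hm] at this
    exact dvd_trans (hdvd i) this
  -- combine with coprimality
  have hcop : Pairwise (Function.onFun IsCoprime fun i => ((l i ^ r i : ℕ) : ℤ)) := by
    intro i j hij
    have : Nat.Coprime (l i ^ r i) (l j ^ r j) :=
      Nat.Coprime.pow _ _ ((Nat.coprime_primes (hl i) (hl j)).2 fun h => hij (hinj h))
    exact Int.isCoprime_iff_gcd_eq_one.2 (by exact_mod_cast this)
  have : (∏ i, ((l i ^ r i : ℕ) : ℤ)) ∣ ((q ^ U + 1 : ℕ) : ℤ) :=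
    Fintype.prod_dvd_of_coprime hcop fun i => Int.natCast_dvd_natCast.2 (hdvdU i)
  rw [← Nat.cast_prod] at this
  exact_mod_cast this

lemma fixed_of_pow_card {F K : Type*} [Field F] [Fintype F] [Field K] [Algebra F K] {x : K}
    (hx : x ^ (Fintype.card F) = x) : ∃ c : F, algebraMap F K c = x := by
  classical
  set Q := Fintype.card F with hQ
  have hQ1 : 1 < Q := Fintype.one_lt_card
  set P : K[X] := X ^ Q - X with hP
  have hdeg : P.degree = Q := by
    rw [hP, degree_sub_eq_left_of_degree_lt]
    · exact degree_X_pow Q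
    · rw [degree_X_pow, degree_X]
      exact_mod_cast hQ1
  have hPne : P ≠ 0 := by
    intro h
    rw [h, degree_zero] at hdeg
    exact absurd hdeg.symm (by simp)
  have hroot : ∀ c : F, P.eval (algebraMap F K c) = 0 := by
    intro c
    rw [hP]
    simp only [eval_sub, eval_pow, eval_X]
    rw [← map_pow, hQ, FiniteField.pow_card, sub_self]
  set s := P.roots.toFinset with hs
  set imF := Finset.univ.image (algebraMap F K) with himF
  have hsub : imF ⊆ s := by
    intro y hy
    rw [himF] at hy
    obtain ⟨c, _, rfl⟩ := Finset.mem_image.1 hy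
    rw [hs, Multiset.mem_toFinset, mem_roots hPne]
    exact hroot c
  have hcardim : imF.card = Q := by
    rw [himF, Finset.card_image_of_injective _ (algebraMap F K).injective, Finset.card_univ]
  have hcards : s.card ≤ Q := by
    refine (Multiset.toFinset_card_le _).trans ?_
    refine (P.card_roots' ).trans_eq ?_
    exact natDegree_eq_of_degree_eq_some hdeg
  have heq : imF = s := Finset.eq_of_subset_of_card_le hsub (by omega)
  have hxs : x ∈ s := by
    rw [hs, Multiset.mem_toFinset, mem_roots hPne]
    show P.eval x = 0
    rw [hP]; simp only [eval_sub, eval_pow, eval_X]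
    rw [hx, sub_self]
  rw [← heq, himF] at hxs
  obtain ⟨c, _, hc⟩ := Finset.mem_image.1 hxs
  exact ⟨c, hc⟩

lemma minpoly_eq_prod_orbit {F K : Type*} [Field F] [Fintype F] [Field K] [IsAlgClosed K]
    [Algebra F K] (a : Kˣ) (hfin : IsOfFinOrder a)
    (hcop : (orderOf a).Coprime (Fintype.card F)) :
    (minpoly F (a : K)).map (algebraMap F K) =
      ∏ j ∈ Finset.range (orderOf ((Fintype.card F : ℕ) : ZMod (orderOf a))),
        (X - C ((a : K) ^ (Fintype.card F) ^ j)) := by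
  classical
  set Q := Fintype.card F with hQdef
  set e := orderOf a with he
  set k := orderOf ((Q : ℕ) : ZMod e) with hk
  have ha : 0 < e := hfin.orderOf_pos
  haveI : NeZero e := ⟨ha.ne'⟩
  set ι := algebraMap F K with hι
  have haK : (a : K) ^ e = 1 := by
    rw [← Units.val_pow_eq_pow_val, he, pow_orderOf_eq_one, Units.val_one]
  have hint : IsIntegral F (a : K) :=
    ⟨X ^ e - 1, monic_X_pow_sub_C _ ha.ne', by
      simp only [eval₂_sub, eval₂_pow, eval₂_X, eval₂_one, haK, sub_self]⟩
  -- k is positive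
  have hQunit : IsUnit ((Q : ℕ) : ZMod e) :=
    (ZMod.isUnit_iff_coprime Q e).2 hcop.symm
  have hk0 : 0 < k := by
    have h1 : orderOf ((Q : ℕ) : ZMod e) = orderOf hQunit.unit := by
      rw [← orderOf_units, hQunit.unit_spec]
    rw [hk, h1]
    exact orderOf_pos _
  -- Q ^ k ≡ 1 mod e
  have hQk1 : Q ^ k ≡ 1 [MOD e] := by
    rw [← ZMod.natCast_eq_natCast_iff]
    push_cast
    exact pow_orderOf_eq_one _
  -- periodicity of the orbit
  have hak : a ^ Q ^ k = a := by
    have h := (pow_eq_pow_iff_modEq (x := a)).2 (show Q ^ k ≡ 1 [MOD orderOf a] from hQk1)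
    rwa [pow_one] at h
  have hperu : ∀ j, a ^ Q ^ (j + k) = a ^ Q ^ j := by
    intro j
    rw [pow_add, mul_comm (Q ^ j) (Q ^ k), pow_mul, hak]
  have hper : ∀ j, (a : K) ^ Q ^ (j + k) = (a : K) ^ Q ^ j := by
    intro j
    rw [← Units.val_pow_eq_pow_val, ← Units.val_pow_eq_pow_val, hperu j]
  -- injectivity of the orbit map on range k
  have hinj : Set.InjOn (fun j => (a : K) ^ Q ^ j) (Set.Iio k) := by
    intro i hi j hj hij
    have hiju : a ^ Q ^ i = a ^ Q ^ j := by
      apply Units.ext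
      simpa [Units.val_pow_eq_pow_val] using hij
    have hmod : Q ^ i ≡ Q ^ j [MOD e] :=
      show Q ^ i ≡ Q ^ j [MOD orderOf a] from (pow_eq_pow_iff_modEq).1 hiju
    have hzm : ((Q : ℕ) : ZMod e) ^ i = ((Q : ℕ) : ZMod e) ^ j := by
      have := (ZMod.natCast_eq_natCast_iff _ _ _).2 hmod
      push_cast at this
      exact this
    exact pow_injOn_Iio_orderOf (by simpa [hk] using hi) (by simpa [hk] using hj) hzm
  set g : K[X] := ∏ j ∈ Finset.range k, (X - C ((a : K) ^ Q ^ j)) with hg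
  have hgmonic : g.Monic := monic_prod_of_monic _ _ fun _ _ => monic_X_sub_C _
  have hgdeg : g.natDegree = k := by
    rw [hg, natDegree_prod_of_monic _ _ fun _ _ => monic_X_sub_C _]
    rw [Finset.sum_congr rfl fun j _ => natDegree_X_sub_C ((a : K) ^ Q ^ j)]
    simp
  -- characteristic and Frobenius
  obtain ⟨fdim, hp, hcard⟩ := FiniteField.card F (ringChar F)
  set p := ringChar F with hpdef
  haveI : CharP K p := charP_of_injective_algebraMap (algebraMap F K).injective p
  haveI : ExpChar K p := ExpChar.prime hp
  set Φ : K →+* K := iterateFrobenius K p fdim with hΦ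
  have hΦdef : ∀ x : K, Φ x = x ^ Q := by
    intro x
    rw [hΦ, iterateFrobenius_def, hQdef, hcard]
  -- g is fixed by Φ
  have hmapg : g.map Φ = g := by
    rw [hg, Polynomial.map_prod]
    have h1 : ∀ j, (X - C ((a : K) ^ Q ^ j)).map Φ = X - C ((a : K) ^ Q ^ (j + 1)) := by
      intro j
      rw [Polynomial.map_sub, map_X, map_C, hΦdef, ← pow_mul, ← pow_succ]
    rw [Finset.prod_congr rfl fun j _ => h1 j]
    exact prod_range_shift_one (h := fun j => X - C ((a : K) ^ Q ^ j))
      (fun j => by show X - C ((a : K) ^ Q ^ (j + k)) = X - C ((a : K) ^ Q ^ j); rw [hper j])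
  have hfix : ∀ i, Φ (g.coeff i) = g.coeff i := by
    intro i
    conv_rhs => rw [← hmapg]
    rw [coeff_map]
  -- lift g to F[X]
  have hlift : g ∈ Polynomial.lifts ι := by
    rw [Polynomial.lifts_iff_coeff_lifts]
    intro i
    obtain ⟨c, hc⟩ := fixed_of_pow_card (F := F) (x := g.coeff i) (by rw [← hΦdef, hfix])
    exact ⟨c, hc⟩
  obtain ⟨g₀, hg₀map, hg₀deg, hg₀monic⟩ :=
    Polynomial.lifts_and_degree_eq_and_monic hlift hgmonic
  -- minpoly divides g₀
  have hmdvd : minpoly F (a : K) ∣ g₀ := by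
    apply minpoly.dvd
    rw [aeval_def, ← eval_map, hg₀map, hg, eval_prod]
    refine Finset.prod_eq_zero (Finset.mem_range.2 hk0) ?_
    simp
  -- all orbit elements are roots of P := minpoly.map ι
  set P : K[X] := (minpoly F (a : K)).map ι with hPdef
  have hPfix : P.map Φ = P := by
    rw [hPdef, Polynomial.map_map]
    congr 1
    refine RingHom.ext fun c => ?_
    rw [RingHom.comp_apply, hΦdef, ← map_pow, hQdef, FiniteField.pow_card]
  have hProot : ∀ j, P.eval ((a : K) ^ Q ^ j) = 0 := by
    intro j
    induction j with
    | zero =>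
      simp only [pow_zero, pow_one]
      rw [hPdef, hι, eval_map, ← aeval_def]
      exact minpoly.aeval F _
    | succ j ih =>
      have : (a : K) ^ Q ^ (j + 1) = Φ ((a : K) ^ Q ^ j) := by
        rw [hΦdef, ← pow_mul, ← pow_succ]
      rw [this]
      have h2 : eval (Φ ((a : K) ^ Q ^ j)) P = Φ (eval ((a : K) ^ Q ^ j) P) := by
        conv_lhs => rw [← hPfix]
        rw [eval_map, eval₂_at_apply]
      rw [h2, ih, map_zero]
  have hPne : P ≠ 0 := Polynomial.map_ne_zero (minpoly.ne_zero hint)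
  -- degree bound
  have hkle : k ≤ (minpoly F (a : K)).natDegree := by
    have hOsub : (Finset.range k).image (fun j => (a : K) ^ Q ^ j) ⊆ P.roots.toFinset := by
      intro y hy
      obtain ⟨j, _, rfl⟩ := Finset.mem_image.1 hy
      rw [Multiset.mem_toFinset, mem_roots hPne]
      exact hProot j
    have hOcard : ((Finset.range k).image (fun j => (a : K) ^ Q ^ j)).card = k := by
      rw [Finset.card_image_of_injOn (by rwa [Finset.coe_range]), Finset.card_range]
    calc k = _ := hOcard.symm
      _ ≤ P.roots.toFinset.card := Finset.card_le_card hOsub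
      _ ≤ Multiset.card P.roots := Multiset.toFinset_card_le _
      _ ≤ P.natDegree := P.card_roots'
      _ = (minpoly F (a : K)).natDegree := natDegree_map _
  -- conclude g₀ = minpoly
  have hg₀deg' : g₀.natDegree = k := by
    have : g₀.natDegree = g.natDegree := by
      rw [← natDegree_map (algebraMap F K) (p := g₀), hg₀map]
    rw [this, hgdeg]
  obtain ⟨c, hc⟩ := hmdvd
  have hcne : c ≠ 0 := by
    intro h
    rw [h, mul_zero] at hc
    exact hg₀monic.ne_zero hc
  have hdegmul : g₀.natDegree = (minpoly F (a : K)).natDegree + c.natDegree := by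
    rw [hc, natDegree_mul (minpoly.ne_zero hint) hcne]
  have hcdeg : c.natDegree = 0 := by omega
  have hcmonic : c.Monic := (minpoly.monic hint).of_mul_monic_left (hc ▸ hg₀monic)
  have hc1 : c = 1 := hcmonic.natDegree_eq_zero.1 hcdeg
  rw [hc1, mul_one] at hc
  rw [hPdef, ← hc] at *
  exact hg₀map

lemma reverse_one' {K : Type*} [Field K] : (1 : K[X]).reverse = 1 := by
  unfold Polynomial.reverse
  rw [natDegree_one]
  rw [← C_1, reflect_C, pow_zero, mul_one]

lemma reverse_prod' {K : Type*} [Field K] {α : Type*} (s : Finset α) (f : α → K[X]) :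
    (∏ i ∈ s, f i).reverse = ∏ i ∈ s, (f i).reverse := by
  classical
  induction s using Finset.cons_induction with
  | empty => simp [reverse_one']
  | cons i s his ih =>
    rw [Finset.prod_cons, Finset.prod_cons, Polynomial.reverse_mul_of_domain, ih]

lemma reverse_X_sub_C' {K : Type*} [Field K] (c : K) :
    (X - C c : K[X]).reverse = 1 - C c * X := by
  unfold Polynomial.reverse
  rw [natDegree_X_sub_C, reflect_sub, reflect_C]
  rw [show (X : K[X]) = X ^ 1 from (pow_one X).symm, reflect_monomial]
  simp [revAt_le]

lemma cdagger_minpoly_eq {q : ℕ} (hq : IsPrimePow q) {F K : Type*} [Field F] [Fintype F]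
    [Field K] [IsAlgClosed K] [Algebra F K] (hF : Fintype.card F = q ^ 2) (a : Kˣ)
    (hfin : IsOfFinOrder a) (hcop : (orderOf a).Coprime (Fintype.card F))
    {u : ℕ} (hu : Odd u) (hdvd : orderOf a ∣ q ^ u + 1) :
    cdagger q (minpoly F (a : K)) = minpoly F (a : K) := by
  classical
  set Q := Fintype.card F with hQdef
  set e := orderOf a with he
  set k := orderOf ((Q : ℕ) : ZMod e) with hk
  set ι := algebraMap F K with hι
  set f : F[X] := minpoly F (a : K) with hf
  have ha : 0 < e := hfin.orderOf_pos
  haveI : NeZero e := ⟨ha.ne'⟩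
  have hB : f.map ι = ∏ j ∈ Finset.range k, (X - C ((a : K) ^ Q ^ j)) :=
    minpoly_eq_prod_orbit a hfin hcop
  set g : K[X] := ∏ j ∈ Finset.range k, (X - C ((a : K) ^ Q ^ j)) with hg
  -- the exponent j0
  obtain ⟨c, hc⟩ := hu
  set j0 := c + 1 with hj0
  have hu1 : u + 1 = 2 * j0 := by omega
  have hQj0 : Q ^ j0 = q ^ (u + 1) := by rw [hF, ← pow_mul, hu1]
  have key : a ^ Q ^ j0 * a ^ q = 1 := by
    rw [hQj0, ← pow_add]
    have h2 : q ^ (u + 1) + q = (q ^ u + 1) * q := by ring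
    rw [h2, pow_mul, orderOf_dvd_iff_pow_eq_one.1 hdvd, one_pow]
  have hinvq : a⁻¹ ^ q = a ^ Q ^ j0 := by
    rw [inv_pow]
    exact ((eq_inv_of_mul_eq_one_left key).symm)
  -- periodicity
  have hQunit : IsUnit ((Q : ℕ) : ZMod e) := (ZMod.isUnit_iff_coprime Q e).2 hcop.symm
  have hQk1 : Q ^ k ≡ 1 [MOD e] := by
    rw [← ZMod.natCast_eq_natCast_iff]
    push_cast
    exact pow_orderOf_eq_one _
  have hak : a ^ Q ^ k = a := by
    have h := (pow_eq_pow_iff_modEq (x := a)).2 (show Q ^ k ≡ 1 [MOD orderOf a] from hQk1)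
    rwa [pow_one] at h
  have hperu : ∀ j, a ^ Q ^ (j + k) = a ^ Q ^ j := by
    intro j
    rw [pow_add, mul_comm (Q ^ j) (Q ^ k), pow_mul, hak]
  have hper : ∀ j, (a : K) ^ Q ^ (j + k) = (a : K) ^ Q ^ j := by
    intro j
    rw [← Units.val_pow_eq_pow_val, ← Units.val_pow_eq_pow_val, hperu j]
  -- characteristic, q = p ^ m
  obtain ⟨fdim, hp, hcard⟩ := FiniteField.card F (ringChar F)
  set p := ringChar F with hpdef
  obtain ⟨pr, k0, hpr, hk0pos, hqe⟩ := hq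
  have hppr : p = pr := by
    have h1 : p ∣ Q := by rw [hQdef, hcard]; exact dvd_pow_self p fdim.pos.ne'
    have h2 : p ∣ pr ^ (2 * k0) := by
      rw [mul_comm 2 k0, pow_mul, hqe, ← hF]
      exact h1
    have hpr' : Nat.Prime pr := Nat.prime_iff.2 hpr
    exact (Nat.prime_dvd_prime_iff_eq hp hpr').1 (hp.dvd_of_dvd_pow h2)
  have hqp : q = p ^ k0 := by rw [hppr]; exact hqe.symm
  haveI : CharP K p := charP_of_injective_algebraMap (algebraMap F K).injective p
  haveI : ExpChar K p := ExpChar.prime hp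
  haveI : ExpChar F p := ExpChar.prime hp
  set φq : F →+* F := iterateFrobenius F p k0 with hφ
  set Φq : K →+* K := iterateFrobenius K p k0 with hΦ
  have hφdef : ∀ x : F, φq x = x ^ q := fun x => by rw [hφ, iterateFrobenius_def, ← hqp]
  have hΦdef : ∀ x : K, Φq x = x ^ q := fun x => by rw [hΦ, iterateFrobenius_def, ← hqp]
  -- cdagger as a map
  have hcd : cdagger q f = (crecip f).map φq := by
    show (crecip f).sum (fun i b => C (b ^ q) * X ^ i) = _
    rw [show (crecip f).map φq = eval₂ (C.comp φq) X (crecip f) from rfl, eval₂_eq_sum]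
    rw [Polynomial.sum_def, Polynomial.sum_def]
    refine Finset.sum_congr rfl fun i _ => ?_
    rw [RingHom.comp_apply, hφdef]
  -- coefficient zero
  have hgc0 : g.coeff 0 = ∏ j ∈ Finset.range k, (-((a : K) ^ Q ^ j)) := by
    rw [Polynomial.coeff_zero_eq_eval_zero, hg, eval_prod]
    exact Finset.prod_congr rfl fun j _ => by simp
  set w : K := ∏ j ∈ Finset.range k, (-((a : K) ^ Q ^ j)) with hw
  have hwne : w ≠ 0 := by
    rw [hw]
    refine Finset.prod_ne_zero_iff.2 fun j _ => ?_
    rw [neg_ne_zero, ← Units.val_pow_eq_pow_val]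
    exact Units.ne_zero _
  have hfc0 : ι (f.coeff 0) = w := by
    rw [← Polynomial.coeff_map, hB]; exact hgc0
  have hf0 : f.coeff 0 ≠ 0 := by
    intro h
    rw [h, map_zero] at hfc0
    exact hwne hfc0.symm
  -- compute map ι (crecip f)
  have hrev : f.reverse.map ι = (f.map ι).reverse := by
    unfold Polynomial.reverse
    rw [natDegree_map, reflect_map]
  have hS1 : (crecip f).map ι = ∏ j ∈ Finset.range k, (X - C (((a : K) ^ Q ^ j)⁻¹)) := by
    show ((C (f.coeff 0)⁻¹ * f.reverse).map ι) = _
    rw [Polynomial.map_mul, map_C, map_inv₀, hrev, hB, hfc0]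
    rw [reverse_prod']
    rw [Finset.prod_congr rfl fun j _ => reverse_X_sub_C' ((a : K) ^ Q ^ j)]
    have hfac : ∀ j ∈ Finset.range k, (1 : K[X]) - C ((a : K) ^ Q ^ j) * X =
        (-(C ((a : K) ^ Q ^ j))) * (X - C (((a : K) ^ Q ^ j)⁻¹)) := by
      intro j _
      have hne : ((a : K) ^ Q ^ j) ≠ 0 := by
        rw [← Units.val_pow_eq_pow_val]; exact Units.ne_zero _
      have h1 : C ((a : K) ^ Q ^ j) * C (((a : K) ^ Q ^ j)⁻¹) = 1 := by
        rw [← C_mul, mul_inv_cancel₀ hne, C_1]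
      linear_combination -h1
    rw [Finset.prod_congr rfl hfac, Finset.prod_mul_distrib]
    have h2 : (∏ j ∈ Finset.range k, (-(C ((a : K) ^ Q ^ j)) : K[X])) = C w := by
      rw [hw, map_prod]
      exact Finset.prod_congr rfl fun j _ => by rw [map_neg]
    rw [h2, ← mul_assoc, ← C_mul, inv_mul_cancel₀ hwne, C_1, one_mul]
  -- apply Φq
  have hS3 : ∀ j, (((a : K) ^ Q ^ j)⁻¹) ^ q = (a : K) ^ Q ^ (j + j0) := by
    intro j
    have hu' : ((a ^ Q ^ j)⁻¹) ^ q = a ^ Q ^ (j + j0) := by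
      rw [← inv_pow, ← pow_mul, mul_comm (Q ^ j) q, pow_mul, hinvq, ← pow_mul, ← pow_add,
        add_comm j0 j]
    calc (((a : K) ^ Q ^ j)⁻¹) ^ q
        = ((((a ^ Q ^ j)⁻¹ : Kˣ) : K)) ^ q := by
          rw [← Units.val_pow_eq_pow_val, Units.val_inv_eq_inv_val]
      _ = (((a ^ Q ^ j)⁻¹ ^ q : Kˣ) : K) := by rw [Units.val_pow_eq_pow_val]
      _ = (a : K) ^ Q ^ (j + j0) := by rw [hu', Units.val_pow_eq_pow_val]
  have hS2 : ((crecip f).map ι).map Φq = g := by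
    rw [hS1, Polynomial.map_prod]
    have h3 : ∀ j ∈ Finset.range k, (X - C (((a : K) ^ Q ^ j)⁻¹)).map Φq =
        X - C ((a : K) ^ Q ^ (j + j0)) := by
      intro j _
      rw [Polynomial.map_sub, map_X, map_C, hΦdef, hS3]
    rw [Finset.prod_congr rfl h3, hg]
    exact prod_range_shift (h := fun j => X - C ((a : K) ^ Q ^ j))
      (fun j => by show X - C ((a : K) ^ Q ^ (j + k)) = X - C ((a : K) ^ Q ^ j); rw [hper j]) j0
  -- conclude
  apply Polynomial.map_injective ι (RingHom.injective ι)
  have hcomm : Φq.comp ι = ι.comp φq := by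
    refine RingHom.ext fun x => ?_
    rw [RingHom.comp_apply, RingHom.comp_apply, hΦdef, hφdef, map_pow]
  rw [hcd, Polynomial.map_map, ← hcomm, ← Polynomial.map_map, hS2, hB, hg]

theorem stmt12 {q t : ℕ} (hq : IsPrimePow q)
    {F : Type*} [Field F] [Fintype F] (hF : Fintype.card F = q ^ 2)
    (l r a d : Fin t → ℕ)
    (hl : ∀ i, (l i).Prime) (hlodd : ∀ i, Odd (l i)) (hlq : ∀ i, Nat.Coprime (l i) q)
    (hinj : Function.Injective l) (hr : ∀ i, 0 < r i)
    (hord : ∀ i, orderOf ((q : ZMod (l i))) = 2 ^ (a i) * d i)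
    (hd : ∀ i, Odd (d i))
    (ha : ∀ i, a i = 1) :
    (scrimFactors F q (∏ i, l i ^ r i)).ncard =
      ∑ e ∈ (∏ i, l i ^ r i).divisors, Nat.totient e / orderOf ((q : ZMod e) ^ 2) := by
  classical
  set n := ∏ i, l i ^ r i with hn
  have hn0 : 0 < n := Finset.prod_pos fun i _ => pow_pos (hl i).pos _
  have hcopq : n.Coprime q := Nat.Coprime.prod_left fun i _ => (hlq i).pow_left _
  have hcopQ : n.Coprime (Fintype.card F) := by rw [hF]; exact hcopq.pow_right _
  obtain ⟨U, hUodd, hUdvd⟩ := global_dvd q l r a d hl hlodd hinj hr hord hd ha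
  set K := AlgebraicClosure F with hK
  set ι := algebraMap F K with hι
  obtain ⟨fdim, hp, hcard⟩ := FiniteField.card F (ringChar F)
  set p := ringChar F with hpdef
  haveI : CharP K p := charP_of_injective_algebraMap ι.injective p
  have hNe : ∀ e ∈ n.divisors, NeZero ((e : K)) := by
    intro e he
    obtain ⟨hedvd, _⟩ := Nat.mem_divisors.1 he
    constructor
    intro h0
    have hpe : p ∣ e := (CharP.cast_eq_zero_iff K p e).1 h0
    have hpq : p ∣ Fintype.card F := by rw [hcard]; exact dvd_pow_self p fdim.pos.ne'
    have hecop : e.Coprime (Fintype.card F) := Nat.Coprime.coprime_dvd_left hedvd hcopQ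
    have h1 : p ∣ Nat.gcd e (Fintype.card F) := Nat.dvd_gcd hpe hpq
    rw [hecop] at h1
    exact hp.one_lt.ne' (Nat.dvd_one.1 h1)
  set m : K → F[X] := fun x => minpoly F x with hm
  -- master facts for primitive roots
  have master : ∀ e ∈ n.divisors, ∀ x ∈ primitiveRoots e K,
      m x ∈ scrimFactors F q n ∧
      ((primitiveRoots e K).filter fun y => m y = m x).card
        = orderOf ((Fintype.card F : ℕ) : ZMod e) ∧
      ∀ y : K, m y = m x → orderOf y = e := by
    intro e he x hx
    obtain ⟨hedvd, _⟩ := Nat.mem_divisors.1 he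
    have he0 : 0 < e := Nat.pos_of_mem_divisors he
    haveI : NeZero e := ⟨he0.ne'⟩
    have hprim : IsPrimitiveRoot x e := isPrimitiveRoot_of_mem_primitiveRoots hx
    have hxu : IsUnit x := hprim.isUnit he0.ne'
    set ax := hxu.unit with haxd
    have hax : (ax : K) = x := hxu.unit_spec
    have hprimu : IsPrimitiveRoot ax e := by
      rw [← IsPrimitiveRoot.coe_units_iff (ζ := ax), hax]; exact hprim
    have horder : orderOf ax = e := hprimu.eq_orderOf.symm
    have hfinx : IsOfFinOrder ax := orderOf_pos_iff.1 (by rw [horder]; exact he0)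
    have hecop : e.Coprime (Fintype.card F) := Nat.Coprime.coprime_dvd_left hedvd hcopQ
    have hcopo : (orderOf ax).Coprime (Fintype.card F) := by rw [horder]; exact hecop
    have hB0 := minpoly_eq_prod_orbit ax hfinx hcopo
    rw [horder] at hB0
    set Q := Fintype.card F with hQdef
    set k := orderOf ((Q : ℕ) : ZMod e) with hkdef
    have hB : (m x).map ι = ∏ j ∈ Finset.range k, (X - C ((ax : K) ^ Q ^ j)) := by
      rw [hm, ← hax]; exact hB0
    -- positivity of k
    have hQunit : IsUnit ((Q : ℕ) : ZMod e) := (ZMod.isUnit_iff_coprime Q e).2 hecop.symm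
    have hk0 : 0 < k := by
      have h1 : orderOf ((Q : ℕ) : ZMod e) = orderOf hQunit.unit := by
        rw [← orderOf_units, hQunit.unit_spec]
      rw [hkdef, h1]
      exact orderOf_pos _
    -- integrality
    have hxe : x ^ e = 1 := hprim.pow_eq_one
    have hint : IsIntegral F x := ⟨X ^ e - 1, monic_X_pow_sub_C _ he0.ne', by
      simp only [eval₂_sub, eval₂_pow, eval₂_X, eval₂_one, hxe, sub_self]⟩
    -- orbit elements have order e
    have horb : ∀ j : ℕ, orderOf ((ax : K) ^ Q ^ j) = e := by
      intro j
      rw [← Units.val_pow_eq_pow_val, orderOf_units]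
      rw [Nat.Coprime.orderOf_pow (by rw [horder]; exact hecop.pow_right j)]
      exact horder
    -- roots of (m x) are exactly orbit elements
    have hroots : ∀ y : K, aeval y (m x) = 0 ↔ ∃ j ∈ Finset.range k, y = (ax : K) ^ Q ^ j := by
      intro y
      constructor
      · intro hy
        have h1 : eval y ((m x).map ι) = 0 := by
          rw [hι, eval_map, ← aeval_def]; exact hy
        rw [hB, eval_prod] at h1
        obtain ⟨j, hj, hj0⟩ := Finset.prod_eq_zero_iff.1 h1
        refine ⟨j, hj, ?_⟩
        rw [eval_sub, eval_X, eval_C, sub_eq_zero] at hj0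
        exact hj0
      · rintro ⟨j, hj, rfl⟩
        have h1 : eval ((ax : K) ^ Q ^ j) ((m x).map ι) = 0 := by
          rw [hB, eval_prod]
          refine Finset.prod_eq_zero hj ?_
          rw [eval_sub, eval_X, eval_C, sub_self]
        rw [hι, eval_map, ← aeval_def] at h1
        exact h1
    -- minpoly of an orbit element equals m x
    have hminorb : ∀ y : K, (∃ j ∈ Finset.range k, y = (ax : K) ^ Q ^ j) → m y = m x := by
      intro y hy
      have h9 : m x = minpoly F y :=
        minpoly.eq_of_irreducible_of_monic (minpoly.irreducible hint)
          ((hroots y).2 hy) (minpoly.monic hint)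
      exact h9.symm
    refine ⟨?_, ?_, ?_⟩
    · -- SCRIM membership
      refine ⟨⟨minpoly.monic hint, minpoly.irreducible hint, ?_⟩, ?_⟩
      · have := cdagger_minpoly_eq hq hF ax hfinx hcopo hUodd
          (by rw [horder]; exact hedvd.trans hUdvd)
        rw [hax] at this
        exact this.symm
      · apply minpoly.dvd
        obtain ⟨cc, hcc⟩ := hedvd
        simp only [map_sub, map_pow, aeval_X, map_one]
        rw [hcc, pow_mul, hxe, one_pow, sub_self]
    · -- fiber cardinality
      have hfil : ((primitiveRoots e K).filter fun y => m y = m x)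
          = (Finset.range k).image (fun j => (ax : K) ^ Q ^ j) := by
        ext y
        constructor
        · intro hy
          obtain ⟨hyT, hym⟩ := Finset.mem_filter.1 hy
          have : aeval y (m x) = 0 := by
            rw [← hym, hm]
            exact minpoly.aeval F y
          obtain ⟨j, hj, rfl⟩ := (hroots y).1 this
          exact Finset.mem_image.2 ⟨j, hj, rfl⟩
        · intro hy
          obtain ⟨j, hj, rfl⟩ := Finset.mem_image.1 hy
          refine Finset.mem_filter.2 ⟨?_, hminorb _ ⟨j, hj, rfl⟩⟩
          rw [mem_primitiveRoots he0]
          have h2 : IsPrimitiveRoot ((ax : K) ^ Q ^ j) (orderOf ((ax : K) ^ Q ^ j)) :=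
            IsPrimitiveRoot.orderOf _
          rwa [horb j] at h2
      rw [hfil]
      -- injectivity on range k
      have hQk1 : Q ^ k ≡ 1 [MOD e] := by
        rw [← ZMod.natCast_eq_natCast_iff]
        push_cast
        exact pow_orderOf_eq_one _
      have hinj2 : Set.InjOn (fun j => (ax : K) ^ Q ^ j) (Set.Iio k) := by
        intro i hi j hj hij
        have hiju : ax ^ Q ^ i = ax ^ Q ^ j := by
          apply Units.ext
          simpa [Units.val_pow_eq_pow_val] using hij
        have hmod : Q ^ i ≡ Q ^ j [MOD e] := by
          rw [← horder]
          exact (pow_eq_pow_iff_modEq).1 hiju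
        have hzm : ((Q : ℕ) : ZMod e) ^ i = ((Q : ℕ) : ZMod e) ^ j := by
          have := (ZMod.natCast_eq_natCast_iff _ _ _).2 hmod
          push_cast at this
          exact this
        exact pow_injOn_Iio_orderOf (by simpa [hkdef] using hi) (by simpa [hkdef] using hj) hzm
      rw [Finset.card_image_of_injOn (by rwa [Finset.coe_range]), Finset.card_range]
    · -- order of any y with same minpoly
      intro y hym
      have : aeval y (m x) = 0 := by
        rw [← hym, hm]
        exact minpoly.aeval F y
      obtain ⟨j, hj, rfl⟩ := (hroots y).1 this
      exact horb j
  -- set equality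
  have hset : scrimFactors F q n =
      ↑(n.divisors.biUnion fun e => (primitiveRoots e K).image m) := by
    ext f
    constructor
    · intro hf
      obtain ⟨⟨hmon, hirr, hcdag⟩, hdvdf⟩ := hf
      have hdegpos : 0 < (Polynomial.map ι f).degree := by
        rw [degree_map]; exact degree_pos_of_irreducible hirr
      obtain ⟨x, hxroot⟩ := IsAlgClosed.exists_root (f.map ι) hdegpos.ne'
      have haev : aeval x f = 0 := by rw [aeval_def, ← eval_map]; exact hxroot
      have hxn : x ^ n = 1 := by
        obtain ⟨gq, hgq⟩ := hdvdf
        have h1 : aeval x (X ^ n - 1 : F[X]) = 0 := by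
          rw [hgq, map_mul, haev, zero_mul]
        simp only [map_sub, map_pow, aeval_X, map_one] at h1
        exact sub_eq_zero.1 h1
      have hx0 : x ≠ 0 := by
        intro h0; rw [h0, zero_pow hn0.ne'] at hxn; exact zero_ne_one hxn
      have hxu : IsUnit x := isUnit_iff_ne_zero.2 hx0
      set ax := hxu.unit with haxd
      have hax : (ax : K) = x := hxu.unit_spec
      have haxn : ax ^ n = 1 := by
        apply Units.ext
        rw [Units.val_pow_eq_pow_val, hax, hxn, Units.val_one]
      have hfin : IsOfFinOrder ax := isOfFinOrder_iff_pow_eq_one.2 ⟨n, hn0, haxn⟩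
      set e := orderOf ax with hedef
      have hedvd : e ∣ n := orderOf_dvd_of_pow_eq_one haxn
      have he0 : 0 < e := hfin.orderOf_pos
      have hemem : e ∈ n.divisors := Nat.mem_divisors.2 ⟨hedvd, hn0.ne'⟩
      have hxprim : x ∈ primitiveRoots e K := by
        rw [mem_primitiveRoots he0, ← hax]
        exact IsPrimitiveRoot.coe_units_iff.2 (IsPrimitiveRoot.orderOf ax)
      have hfm : f = m x := minpoly.eq_of_irreducible_of_monic hirr haev hmon
      exact Finset.mem_coe.2
        (Finset.mem_biUnion.2 ⟨e, hemem, Finset.mem_image.2 ⟨x, hxprim, hfm.symm⟩⟩)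
    · intro hf
      obtain ⟨e, hemem, hfimg⟩ := Finset.mem_biUnion.1 (Finset.mem_coe.1 hf)
      obtain ⟨x, hx, rfl⟩ := Finset.mem_image.1 hfimg
      exact (master e hemem x hx).1
  rw [hset, Set.ncard_coe_finset]
  have hdisj : ∀ e₁ ∈ n.divisors, ∀ e₂ ∈ n.divisors, e₁ ≠ e₂ →
      Disjoint ((primitiveRoots e₁ K).image m) ((primitiveRoots e₂ K).image m) := by
    intro e₁ h1 e₂ h2 hne
    rw [Finset.disjoint_left]
    intro b hb1 hb2
    obtain ⟨x, hx, hbx⟩ := Finset.mem_image.1 hb1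
    obtain ⟨y, hy, hby⟩ := Finset.mem_image.1 hb2
    have hmyx : m y = m x := by rw [hby, hbx]
    have ho := (master e₁ h1 x hx).2.2 y hmyx
    have hy' : IsPrimitiveRoot y e₂ := isPrimitiveRoot_of_mem_primitiveRoots hy
    exact hne (by rw [← ho, hy'.eq_orderOf])
  rw [Finset.card_biUnion hdisj]
  refine Finset.sum_congr rfl fun e he => ?_
  have he0 : 0 < e := Nat.pos_of_mem_divisors he
  haveI := hNe e he
  haveI : NeZero e := ⟨he0.ne'⟩
  obtain ⟨ζ, hζ⟩ := HasEnoughRootsOfUnity.exists_primitiveRoot K e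
  have hTcard : (primitiveRoots e K).card = Nat.totient e := hζ.card_primitiveRoots
  set k := orderOf ((Fintype.card F : ℕ) : ZMod e) with hkdef
  have hord2 : orderOf ((q : ZMod e) ^ 2) = k := by
    rw [hkdef]
    congr 1
    rw [hF]
    push_cast
    ring
  rw [hord2]
  have hecop : e.Coprime (Fintype.card F) :=
    Nat.Coprime.coprime_dvd_left (Nat.mem_divisors.1 he).1 hcopQ
  have hQunit : IsUnit ((Fintype.card F : ℕ) : ZMod e) :=
    (ZMod.isUnit_iff_coprime _ e).2 hecop.symm
  have hk0 : 0 < k := by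
    have h1 : orderOf ((Fintype.card F : ℕ) : ZMod e) = orderOf hQunit.unit := by
      rw [← orderOf_units, hQunit.unit_spec]
    rw [hkdef, h1]; exact orderOf_pos _
  have hsum : (primitiveRoots e K).card
      = ∑ b ∈ (primitiveRoots e K).image m,
          ((primitiveRoots e K).filter fun x => m x = b).card :=
    Finset.card_eq_sum_card_fiberwise fun x hx => Finset.mem_image_of_mem m hx
  have hsum2 : ∀ b ∈ (primitiveRoots e K).image m,
      ((primitiveRoots e K).filter fun x => m x = b).card = k := by
    intro b hb
    obtain ⟨x, hx, rfl⟩ := Finset.mem_image.1 hb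
    exact (master e he x hx).2.1
  rw [Finset.sum_congr rfl hsum2, Finset.sum_const, smul_eq_mul, hTcard] at hsum
  exact (Nat.div_eq_of_eq_mul_left hk0 hsum).symm
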